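/- arXiv:1409.1458 — 2 statements merged into one kernel-verified Lean document; each statement's English description precedes it below -/
import Mathlib

section
/- If ‖x_i‖ ≤ 1 for all i = 1,…,n, then 0 ≤ σ_min ≤ ñ, where ñ := max_{1≤k≤K} n_k is the size of the largest block of the partition. -/
open Finset MeasureTheory

noncomputable section

/-- Squared Euclidean norm of a finite real vector. -/
def sqnorm {m : ℕ} (v : Fin m → ℝ) : ℝ := ∑ j, v j ^ 2

/-- Euclidean norm of a finite real vector. -/
def euclNorm {m : ℕ} (v : Fin m → ℝ) : ℝ := Real.sqrt (sqnorm v)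

/-- Euclidean inner product. -/
def dotp {m : ℕ} (u v : Fin m → ℝ) : ℝ := ∑ j, u j * v j

/-- `g` is the (real-valued) Fenchel conjugate of `f`:
`g u` is the least upper bound of `z ↦ u*z - f z`. -/
def IsFenchelConj (f g : ℝ → ℝ) : Prop :=
  ∀ u : ℝ, IsLUB (Set.range fun z : ℝ => u * z - f z) (g u)

/-- `f` is smooth with constant `c`: differentiable with `c`-Lipschitz derivative. -/
def SmoothWith (c : ℝ) (f : ℝ → ℝ) : Prop :=
  Differentiable ℝ f ∧ ∀ z z' : ℝ, |deriv f z - deriv f z'| ≤ c * |z - z'|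

/-- `g : ℝ → ℝ` is `γ`-strongly convex. -/
def StrongConvexWith (γ : ℝ) (g : ℝ → ℝ) : Prop :=
  ConvexOn ℝ Set.univ fun u => g u - γ / 2 * u ^ 2

variable {n d K : ℕ}

/-- `A α` where the `i`-th column of `A` is `x i / (λ n)`. -/
def matA (lam : ℝ) (x : Fin n → Fin d → ℝ) (α : Fin n → ℝ) : Fin d → ℝ :=
  ∑ i, (α i / (lam * n)) • x i

/-- The block-`k` subvector `α_[k]` of `α`. -/
def blkOf (part : Fin n → Fin K) (k : Fin K) (α : Fin n → ℝ) :
    {i : Fin n // part i = k} → ℝ :=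
  fun i => α i.1

/-- `A_[k] β`: the block-`k` submatrix of `A` applied to a block-`k` vector. -/
def blkA (lam : ℝ) (x : Fin n → Fin d → ℝ) (part : Fin n → Fin K) (k : Fin K)
    (β : {i : Fin n // part i = k} → ℝ) : Fin d → ℝ :=
  ∑ i : {i : Fin n // part i = k}, (β i / (lam * n)) • x i.1

/-- `α⟨k←β⟩`: replace the block-`k` coordinates of `α` by `β`. -/
def updBlk (part : Fin n → Fin K) (k : Fin K) (α : Fin n → ℝ)
    (β : {i : Fin n // part i = k} → ℝ) : Fin n → ℝ :=
  fun i => if h : part i = k then β ⟨i, h⟩ else α i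

/-- `ι_k β`: zero-padding of a block-`k` vector to a full vector. -/
def padBlk (part : Fin n → Fin K) (k : Fin K)
    (β : {i : Fin n // part i = k} → ℝ) : Fin n → ℝ :=
  fun i => if h : part i = k then β ⟨i, h⟩ else 0

/-- The primal objective `P(w)`. -/
def primalObj (lam : ℝ) (x : Fin n → Fin d → ℝ) (l : Fin n → ℝ → ℝ)
    (w : Fin d → ℝ) : ℝ :=
  lam / 2 * sqnorm w + (1 / (n : ℝ)) * ∑ i, l i (dotp w (x i))

/-- The dual objective `D(α)`. -/
def dualObj (lam : ℝ) (x : Fin n → Fin d → ℝ) (lstar : Fin n → ℝ → ℝ)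
    (α : Fin n → ℝ) : ℝ :=
  -(lam / 2) * sqnorm (matA lam x α) - (1 / (n : ℝ)) * ∑ i, lstar i (-(α i))

/-- The local suboptimality `ε_{D,k}(α)` on block `k`. -/
def epsD (lam : ℝ) (x : Fin n → Fin d → ℝ) (lstar : Fin n → ℝ → ℝ)
    (part : Fin n → Fin K) (k : Fin K) (α : Fin n → ℝ) : ℝ :=
  ⨆ β : {i : Fin n // part i = k} → ℝ,
    dualObj lam x lstar (updBlk part k α β) - dualObj lam x lstar α

/-- `σ_min`: the supremum over nonzero `α` of
`λ²n²·(Σ_k ‖A_[k]α_[k]‖² − ‖Aα‖²)/‖α‖²`. -/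
def sigmaMin (lam : ℝ) (x : Fin n → Fin d → ℝ) (part : Fin n → Fin K) : ℝ :=
  sSup { r : ℝ | ∃ α : Fin n → ℝ, α ≠ 0 ∧
    r = lam ^ 2 * (n : ℝ) ^ 2 *
      ((∑ k, sqnorm (blkA lam x part k (blkOf part k α))) - sqnorm (matA lam x α)) /
        sqnorm α }

/-- The local dual objective `D_k(β; w̄)` on block `k`. -/
def locDual (lam : ℝ) (x : Fin n → Fin d → ℝ) (lstar : Fin n → ℝ → ℝ)
    (part : Fin n → Fin K) (k : Fin K) (wbar : Fin d → ℝ)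
    (β : {i : Fin n // part i = k} → ℝ) : ℝ :=
  -(lam / 2) * sqnorm (wbar + blkA lam x part k β)
    - (1 / (n : ℝ)) * ∑ i : {i : Fin n // part i = k}, lstar i.1 (-(β i))
    + lam / 2 * sqnorm wbar

/-- The local primal objective `P_k(v; w̄)` on block `k`. -/
def locPrimal (lam : ℝ) (x : Fin n → Fin d → ℝ) (l : Fin n → ℝ → ℝ)
    (part : Fin n → Fin K) (k : Fin K) (wbar v : Fin d → ℝ) : ℝ :=
  (1 / (n : ℝ)) * ∑ i : {i : Fin n // part i = k}, l i.1 (dotp (wbar + v) (x i.1))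
    + lam / 2 * sqnorm v

/-- Run `H` iterations of the coordinate-wise step `st`, where `ω` lists
the (randomly chosen) coordinates used in the successive iterations. -/
def iterRun {γ : Type*} {ι : Type*} (st : ι → γ → γ) :
    (H : ℕ) → (Fin H → ι) → γ → γ
  | 0, _, b => b
  | H + 1, ω, b => iterRun st H (fun h => ω h.succ) (st (ω 0) b)

lemma sqnorm_nonneg {m : ℕ} (v : Fin m → ℝ) : 0 ≤ sqnorm v :=
  Finset.sum_nonneg fun _ _ => sq_nonneg _

lemma sqnorm_zero {m : ℕ} : sqnorm (0 : Fin m → ℝ) = 0 := by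
  unfold sqnorm; simp

lemma sqnorm_pos {m : ℕ} {v : Fin m → ℝ} (hv : v ≠ 0) : 0 < sqnorm v := by
  obtain ⟨i, hi⟩ := Function.ne_iff.mp hv
  exact Finset.sum_pos' (fun _ _ => sq_nonneg _)
    ⟨i, Finset.mem_univ i, pow_two_pos_of_ne_zero hi⟩

lemma sqnorm_sum_smul_le {m : ℕ} {ι : Type*} [Fintype ι] (c : ι → ℝ)
    (y : ι → Fin m → ℝ) (hy : ∀ i, sqnorm (y i) ≤ 1) :
    sqnorm (∑ i, c i • y i) ≤ (Fintype.card ι : ℝ) * ∑ i, c i ^ 2 := by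
  unfold sqnorm
  calc ∑ j, (∑ i, c i • y i) j ^ 2
      = ∑ j, (∑ i, c i * y i j) ^ 2 := by simp
    _ ≤ ∑ j : Fin m, (Fintype.card ι : ℝ) * ∑ i, (c i * y i j) ^ 2 := by
        refine Finset.sum_le_sum fun j _ => ?_
        simpa [Finset.card_univ] using
          sq_sum_le_card_mul_sum_sq (s := Finset.univ) (f := fun i => c i * y i j)
    _ = (Fintype.card ι : ℝ) * ∑ i, c i ^ 2 * ∑ j, y i j ^ 2 := by
        rw [← Finset.mul_sum, Finset.sum_comm]
        congr 1
        refine Finset.sum_congr rfl fun i _ => ?_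
        rw [Finset.mul_sum]
        exact Finset.sum_congr rfl fun j _ => by ring
    _ ≤ (Fintype.card ι : ℝ) * ∑ i, c i ^ 2 := by
        refine mul_le_mul_of_nonneg_left ?_ (Nat.cast_nonneg _)
        refine Finset.sum_le_sum fun i _ => ?_
        calc c i ^ 2 * ∑ j, y i j ^ 2 ≤ c i ^ 2 * 1 :=
              mul_le_mul_of_nonneg_left (hy i) (sq_nonneg _)
          _ = c i ^ 2 := mul_one _

/-- if `‖x_i‖ ≤ 1` for all `i`, then `0 ≤ σ_min ≤ ñ`. -/
theorem sigmaMin_bounds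
    (n d K : ℕ) (hn : 0 < n) (hd : 0 < d) (hK : 0 < K)
    (lam : ℝ) (hlam : 0 < lam)
    (x : Fin n → Fin d → ℝ) (hx : ∀ i, euclNorm (x i) ≤ 1)
    (part : Fin n → Fin K) (hpart : ∀ k, ∃ i, part i = k)
    (ntilde : ℕ)
    (hnt : ntilde = Finset.univ.sup fun k : Fin K =>
      Fintype.card {i : Fin n // part i = k}) :
    0 ≤ sigmaMin lam x part ∧ sigmaMin lam x part ≤ (ntilde : ℝ) := by
  have hln : (0:ℝ) < lam * n := by
    have : (0:ℝ) < n := Nat.cast_pos.mpr hn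
    positivity
  have hln2 : ((lam * n) ^ 2 : ℝ) ≠ 0 := by positivity
  have hx' : ∀ i, sqnorm (x i) ≤ 1 := by
    intro i
    have h := hx i
    unfold euclNorm at h
    nlinarith [Real.sq_sqrt (sqnorm_nonneg (x i)), Real.sqrt_nonneg (sqnorm (x i))]
  unfold sigmaMin
  set S : Set ℝ := { r : ℝ | ∃ α : Fin n → ℝ, α ≠ 0 ∧
    r = lam ^ 2 * (n : ℝ) ^ 2 *
      ((∑ k, sqnorm (blkA lam x part k (blkOf part k α))) - sqnorm (matA lam x α)) /
        sqnorm α } with hS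
  -- every element of S is ≤ ntilde
  have hub : ∀ r ∈ S, r ≤ (ntilde : ℝ) := by
    rintro r ⟨α, hα, rfl⟩
    have hαpos := sqnorm_pos hα
    rw [div_le_iff₀ hαpos]
    have h1 : ∀ k, sqnorm (blkA lam x part k (blkOf part k α)) ≤
        (Fintype.card {i : Fin n // part i = k} : ℝ) *
          ∑ i : {i : Fin n // part i = k}, (α i.1 / (lam * n)) ^ 2 := by
      intro k
      exact sqnorm_sum_smul_le _ _ (fun i => hx' i.1)
    have hcard : ∀ k, (Fintype.card {i : Fin n // part i = k} : ℝ) ≤ (ntilde : ℝ) := by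
      intro k
      exact_mod_cast Nat.cast_le.mpr (hnt ▸ Finset.le_sup (Finset.mem_univ k))
    set T : ℝ := ∑ i, (α i / (lam * n)) ^ 2 with hT
    have hTk : ∀ k, (0:ℝ) ≤ ∑ i : {i : Fin n // part i = k}, (α i.1 / (lam * n)) ^ 2 :=
      fun k => Finset.sum_nonneg fun _ _ => sq_nonneg _
    have h2 : (∑ k, sqnorm (blkA lam x part k (blkOf part k α))) ≤ (ntilde : ℝ) * T := by
      calc (∑ k, sqnorm (blkA lam x part k (blkOf part k α)))
          ≤ ∑ k, (ntilde : ℝ) * ∑ i : {i : Fin n // part i = k}, (α i.1 / (lam * n)) ^ 2 := by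
            refine Finset.sum_le_sum fun k _ => le_trans (h1 k) ?_
            exact mul_le_mul_of_nonneg_right (hcard k) (hTk k)
        _ = (ntilde : ℝ) * ∑ k, ∑ i : {i : Fin n // part i = k}, (α i.1 / (lam * n)) ^ 2 := by
            rw [Finset.mul_sum]
        _ = (ntilde : ℝ) * T := by
            rw [hT]
            congr 1
            exact Fintype.sum_fiberwise part (fun i => (α i / (lam * n)) ^ 2)
    have hQ : (lam * n) ^ 2 * T = sqnorm α := by
      rw [hT, Finset.mul_sum]
      unfold sqnorm
      refine Finset.sum_congr rfl fun i _ => ?_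
      rw [div_pow, mul_div_cancel₀ _ hln2]
    have hM := sqnorm_nonneg (matA lam x α)
    have hmain : lam ^ 2 * (n : ℝ) ^ 2 *
        ((∑ k, sqnorm (blkA lam x part k (blkOf part k α))) - sqnorm (matA lam x α))
        ≤ (lam * n) ^ 2 * ((ntilde : ℝ) * T) := by
      rw [show lam ^ 2 * (n : ℝ) ^ 2 = (lam * n) ^ 2 by ring]
      refine mul_le_mul_of_nonneg_left ?_ (sq_nonneg _)
      linarith
    calc lam ^ 2 * (n : ℝ) ^ 2 *
        ((∑ k, sqnorm (blkA lam x part k (blkOf part k α))) - sqnorm (matA lam x α))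
        ≤ (lam * n) ^ 2 * ((ntilde : ℝ) * T) := hmain
      _ = (ntilde : ℝ) * ((lam * n) ^ 2 * T) := by ring
      _ = (ntilde : ℝ) * sqnorm α := by rw [hQ]
  -- 0 ∈ S
  have h0 : (0:ℝ) ∈ S := by
    set i0 : Fin n := ⟨0, hn⟩ with hi0
    set α : Fin n → ℝ := fun i => if i = i0 then 1 else 0 with hαdef
    have hα : α ≠ 0 := by
      intro h
      have := congrFun h i0
      simp [hαdef] at this
    refine ⟨α, hα, ?_⟩
    have hblk : ∀ k, blkA lam x part k (blkOf part k α) =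
        if k = part i0 then (1 / (lam * n)) • x i0 else 0 := by
      intro k
      unfold blkA blkOf
      by_cases hk : k = part i0
      · subst hk
        rw [if_pos rfl, Finset.sum_eq_single (⟨i0, rfl⟩ : {i : Fin n // part i = part i0})]
        · simp [hαdef]
        · intro b _ hb
          have hb1 : b.1 ≠ i0 := fun h => hb (Subtype.ext h)
          simp [hαdef, hb1]
        · intro h
          exact absurd (Finset.mem_univ _) h
      · rw [if_neg hk]
        refine Finset.sum_eq_zero fun i _ => ?_
        have hi1 : i.1 ≠ i0 := by
          intro h
          exact hk (h ▸ i.2).symm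
        simp [hαdef, hi1]
    have hmat : matA lam x α = (1 / (lam * n)) • x i0 := by
      unfold matA
      rw [Finset.sum_eq_single i0]
      · simp [hαdef]
      · intro b _ hb
        simp [hαdef, hb]
      · intro h
        exact absurd (Finset.mem_univ _) h
    have hsum : (∑ k, sqnorm (blkA lam x part k (blkOf part k α)))
        = sqnorm (matA lam x α) := by
      rw [hmat]
      calc (∑ k, sqnorm (blkA lam x part k (blkOf part k α)))
          = ∑ k, if k = part i0 then sqnorm ((1 / (lam * n)) • x i0) else 0 := by
            refine Finset.sum_congr rfl fun k _ => ?_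
            rw [hblk k]
            by_cases hk : k = part i0
            · rw [if_pos hk, if_pos hk]
            · rw [if_neg hk, if_neg hk, sqnorm_zero]
        _ = sqnorm ((1 / (lam * n)) • x i0) := by
            rw [Finset.sum_ite_eq' Finset.univ (part i0)
              (fun _ => sqnorm ((1 / (lam * n)) • x i0))]
            simp
    rw [hsum]
    simp
  have hne : S.Nonempty := ⟨0, h0⟩
  have hbdd : BddAbove S := ⟨(ntilde : ℝ), hub⟩
  constructor
  · exact le_csSup hbdd h0
  · exact csSup_le hne hub
end
end

section
/- Assume each ℓ_i is convex and each conjugate ℓ_i* is γ-strongly convex with γ ≥ 0. Fix a block k, w̄ ∈ ℝ^d, and β ∈ ℝ^{n_k}; set v := A_[k]β and w := w̄ + v, and for each i ∈ I_k choose u_i ∈ ℝ with −u_i ∈ ∂ℓ_i(x_iᵀw) (∂ denoting the subdifferential). Let β' be the random result of one LocalSDCA step on block k applied to β. Then for every s ∈ [0,1]: E[D_k(β'; w̄)] − D_k(β; w̄) ≥ (s/n_k)·(P_k(v; w̄) − D_k(β; w̄)) − (1/(2λn²))·(1/n_k)·Σ_{i∈I_k} (s²·‖x_i‖² − λnγ·s·(1−s))·(u_i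 − β_i)². -/
open Finset MeasureTheory

noncomputable section

variable {n d K : ℕ}

lemma dotp_comm' {m : ℕ} (a b : Fin m → ℝ) : dotp a b = dotp b a := by
  unfold dotp; exact Finset.sum_congr rfl fun j _ => mul_comm _ _

lemma sqnorm_add_smul {m : ℕ} (a b : Fin m → ℝ) (r : ℝ) :
    sqnorm (a + r • b) = sqnorm a + 2*r*dotp a b + r^2 * sqnorm b := by
  unfold sqnorm dotp
  rw [Finset.mul_sum, Finset.mul_sum, ← Finset.sum_add_distrib, ← Finset.sum_add_distrib]
  refine Finset.sum_congr rfl fun j _ => ?_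
  simp only [Pi.add_apply, Pi.smul_apply, smul_eq_mul]; ring

lemma sqnorm_add' {m : ℕ} (a b : Fin m → ℝ) :
    sqnorm (a + b) = sqnorm a + 2*dotp a b + sqnorm b := by
  have := sqnorm_add_smul a b 1; simpa using this

lemma fenchel_eq {f g : ℝ → ℝ} (hconj : IsFenchelConj f g) (p z : ℝ)
    (hsub : ∀ y, f z + p * (y - z) ≤ f y) : g p = p * z - f z := by
  refine (hconj p).unique (IsGreatest.isLUB ⟨⟨z, rfl⟩, ?_⟩)
  rintro _ ⟨y, rfl⟩
  have h := hsub y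
  rw [mul_sub] at h; dsimp only; linarith

lemma strong_ineq {g : ℝ → ℝ} {γ : ℝ} (hg : StrongConvexWith γ g)
    (a b s : ℝ) (hs0 : 0 ≤ s) (hs1 : s ≤ 1) :
    g ((1-s)*a + s*b) ≤ (1-s)*g a + s*g b - γ/2*(s*(1-s))*(a-b)^2 := by
  have h := hg.2 (Set.mem_univ a) (Set.mem_univ b) (by linarith : (0:ℝ) ≤ 1-s) hs0 (by ring)
  simp only [smul_eq_mul] at h
  nlinarith [h]

variable {n d K : ℕ}

lemma blkA_update (lam : ℝ) (x : Fin n → Fin d → ℝ) (part : Fin n → Fin K) (k : Fin K)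
    (β : {i : Fin n // part i = k} → ℝ) (i : {i : Fin n // part i = k}) (c : ℝ) :
    blkA lam x part k (Function.update β i c)
      = blkA lam x part k β + ((c - β i)/(lam*n)) • x i.1 := by
  unfold blkA
  funext j
  simp only [Finset.sum_apply, Pi.add_apply, Pi.smul_apply, smul_eq_mul]
  have h1 : ∀ jj ∈ Finset.univ, (Function.update β i c jj / (lam*(n:ℝ))) * x jj.1 j
      = ((β jj / (lam*(n:ℝ))) * x jj.1 j
        + if jj = i then ((c - β i)/(lam*(n:ℝ))) * x i.1 j else 0) := by
    intro jj _
    by_cases h : jj = i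
    · subst h; simp [Function.update_self]; ring
    · simp [Function.update_of_ne h, h]
  rw [Finset.sum_congr rfl h1, Finset.sum_add_distrib, Finset.sum_ite_eq' Finset.univ i]
  simp

lemma sum_update_lstar (lstar : Fin n → ℝ → ℝ) (part : Fin n → Fin K) (k : Fin K)
    (β : {i : Fin n // part i = k} → ℝ) (i : {i : Fin n // part i = k}) (c : ℝ) :
    ∑ jj : {i : Fin n // part i = k}, lstar jj.1 (-(Function.update β i c jj))
      = (∑ jj : {i : Fin n // part i = k}, lstar jj.1 (-(β jj)))
        + (lstar i.1 (-c) - lstar i.1 (-(β i))) := by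
  have h1 : ∀ jj ∈ Finset.univ, lstar jj.1 (-(Function.update β i c jj))
      = lstar jj.1 (-(β jj)) + (if jj = i then lstar i.1 (-c) - lstar i.1 (-(β i)) else 0) := by
    intro jj _
    by_cases h : jj = i
    · subst h; simp [Function.update_self]
    · simp [Function.update_of_ne h, h]
  rw [Finset.sum_congr rfl h1, Finset.sum_add_distrib, Finset.sum_ite_eq' Finset.univ i]
  simp

lemma dotp_blkA (lam : ℝ) (x : Fin n → Fin d → ℝ) (part : Fin n → Fin K) (k : Fin K)
    (β : {i : Fin n // part i = k} → ℝ) (w : Fin d → ℝ) :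
    dotp w (blkA lam x part k β)
      = ∑ i : {i : Fin n // part i = k}, (β i / (lam*(n:ℝ))) * dotp w (x i.1) := by
  unfold dotp blkA
  simp only [Finset.sum_apply, Pi.smul_apply, smul_eq_mul, Finset.mul_sum]
  rw [Finset.sum_comm]
  refine Finset.sum_congr rfl fun i _ => ?_
  refine Finset.sum_congr rfl fun j _ => ?_
  ring

lemma dotp_add_left {m : ℕ} (a b c : Fin m → ℝ) :
    dotp (a + b) c = dotp a c + dotp b c := by
  unfold dotp
  rw [← Finset.sum_add_distrib]
  exact Finset.sum_congr rfl fun j _ => by simp [Pi.add_apply]; ring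

lemma sqnorm_eq_dotp {m : ℕ} (a : Fin m → ℝ) : sqnorm a = dotp a a := by
  unfold sqnorm dotp
  exact Finset.sum_congr rfl fun j _ => sq (a j)


/-- expected improvement of one LocalSDCA step (Lemma 3). -/
theorem sdca_one_step_improvement
    (n d K : ℕ) (hn : 0 < n) (hd : 0 < d) (hK : 0 < K)
    (lam γ : ℝ) (hlam : 0 < lam) (hγ : 0 ≤ γ)
    (x : Fin n → Fin d → ℝ)
    (l lstar : Fin n → ℝ → ℝ)
    (hconj : ∀ i, IsFenchelConj (l i) (lstar i))
    (hconv : ∀ i, ConvexOn ℝ Set.univ (l i))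
    (hstrong : ∀ i, StrongConvexWith γ (lstar i))
    (part : Fin n → Fin K) (k : Fin K) (hk : ∃ i, part i = k)
    (wbar : Fin d → ℝ) (β : {i : Fin n // part i = k} → ℝ)
    (v w : Fin d → ℝ) (hv : v = blkA lam x part k β) (hw : w = wbar + v)
    -- subgradients: −u_i ∈ ∂ℓ_i(x_iᵀw)
    (u : {i : Fin n // part i = k} → ℝ)
    (hu : ∀ (i : {i : Fin n // part i = k}) (y : ℝ),
      l i.1 (dotp (x i.1) w) + (-(u i)) * (y - dotp (x i.1) w) ≤ l i.1 y)
    -- one LocalSDCA step on coordinate `i`: replace `β i` by the maximizing value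
    (st : {i : Fin n // part i = k} → ({i : Fin n // part i = k} → ℝ) →
      ({i : Fin n // part i = k} → ℝ))
    (hst_coord : ∀ i β' j, j ≠ i → st i β' j = β' j)
    (hst_max : ∀ i β' c,
      locDual lam x lstar part k wbar (Function.update β' i c)
        ≤ locDual lam x lstar part k wbar (st i β'))
    (s : ℝ) (hs0 : 0 ≤ s) (hs1 : s ≤ 1) :
    s / (Fintype.card {i : Fin n // part i = k} : ℝ) *
        (locPrimal lam x l part k wbar v - locDual lam x lstar part k wbar β)
      - 1 / (2 * lam * (n : ℝ) ^ 2) *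
          (1 / (Fintype.card {i : Fin n // part i = k} : ℝ)) *
          ∑ i : {i : Fin n // part i = k},
            (s ^ 2 * sqnorm (x i.1) - lam * n * γ * s * (1 - s)) * (u i - β i) ^ 2
    ≤ (∑ i : {i : Fin n // part i = k}, locDual lam x lstar part k wbar (st i β))
          / (Fintype.card {i : Fin n // part i = k} : ℝ)
        - locDual lam x lstar part k wbar β := by
  
  have hn' : (0:ℝ) < (n:ℝ) := by exact_mod_cast hn
  have hn0 : (n:ℝ) ≠ 0 := ne_of_gt hn'
  have hlam0 : lam ≠ 0 := ne_of_gt hlam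
  haveI : Nonempty {i : Fin n // part i = k} := ⟨⟨hk.choose, hk.choose_spec⟩⟩
  have hnk : (0:ℝ) < (Fintype.card {i : Fin n // part i = k} : ℝ) := by
    exact_mod_cast Fintype.card_pos
  have hnk0 : (Fintype.card {i : Fin n // part i = k} : ℝ) ≠ 0 := ne_of_gt hnk
  -- per-coordinate key inequality
  have key : ∀ i : {i : Fin n // part i = k},
      (s/(n:ℝ)) * (β i * dotp w (x i.1) + l i.1 (dotp w (x i.1)) + lstar i.1 (-(β i)))
        - (1/(2*lam*(n:ℝ)^2)) *
            ((s^2 * sqnorm (x i.1) - lam * n * γ * s * (1-s)) * (u i - β i)^2)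
      ≤ locDual lam x lstar part k wbar (st i β) - locDual lam x lstar part k wbar β := by
    intro i
    set z := dotp w (x i.1) with hz
    set q := u i - β i with hq
    set c := β i + s * q with hcdef
    -- value of locDual at the single-coordinate update
    have hA : locDual lam x lstar part k wbar (Function.update β i c)
        = locDual lam x lstar part k wbar β
          - (lam/2) * (2*(s*q/(lam*(n:ℝ)))*z + (s*q/(lam*(n:ℝ)))^2 * sqnorm (x i.1))
          - (1/(n:ℝ)) * (lstar i.1 (-c) - lstar i.1 (-(β i))) := by
      unfold locDual
      rw [blkA_update, sum_update_lstar]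
      have hr : c - β i = s*q := by rw [hcdef]; ring
      rw [hr]
      have hassoc : wbar + (blkA lam x part k β + ((s*q)/(lam*(n:ℝ))) • x i.1)
          = (wbar + blkA lam x part k β) + ((s*q)/(lam*(n:ℝ))) • x i.1 := by
        funext j; simp [Pi.add_apply]; ring
      rw [hassoc, sqnorm_add_smul]
      rw [show wbar + blkA lam x part k β = w by rw [hw, hv]]
      rw [hz]
      ring
    -- Fenchel equality at the subgradient
    have hfc : lstar i.1 (-(u i)) = (-(u i))*z - l i.1 z := by
      have := fenchel_eq (hconj i.1) (-(u i)) (dotp (x i.1) w) (hu i)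
      rwa [dotp_comm' (x i.1) w, ← hz] at this
    -- strong convexity bound
    have hB : lstar i.1 (-c) ≤ (1-s)*lstar i.1 (-(β i)) + s*((-(u i))*z - l i.1 z)
        - γ/2*(s*(1-s))*q^2 := by
      have hcc : -c = (1-s)*(-(β i)) + s*(-(u i)) := by rw [hcdef, hq]; ring
      have hsc := strong_ineq (hstrong i.1) (-(β i)) (-(u i)) s hs0 hs1
      have h2 : ((-(β i)) - (-(u i)))^2 = q^2 := by rw [hq]; ring
      rw [hcc]
      calc lstar i.1 ((1-s)*(-(β i)) + s*(-(u i)))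
          ≤ (1-s)*lstar i.1 (-(β i)) + s*lstar i.1 (-(u i))
            - γ/2*(s*(1-s))*((-(β i)) - (-(u i)))^2 := hsc
        _ = _ := by rw [hfc, h2]
    have hE : (1/(n:ℝ)) * (lstar i.1 (-c) - lstar i.1 (-(β i)))
        ≤ (1/(n:ℝ)) * (((1-s)*lstar i.1 (-(β i)) + s*((-(u i))*z - l i.1 z)
            - γ/2*(s*(1-s))*q^2) - lstar i.1 (-(β i))) := by
      apply mul_le_mul_of_nonneg_left _ (by positivity)
      linarith [hB]
    have hu' : u i = β i + q := by rw [hq]; ring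
    have hid : (s/(n:ℝ)) * (β i * z + l i.1 z + lstar i.1 (-(β i)))
        - (1/(2*lam*(n:ℝ)^2)) *
            ((s^2 * sqnorm (x i.1) - lam * n * γ * s * (1-s)) * q^2)
      = - (lam/2) * (2*(s*q/(lam*(n:ℝ)))*z + (s*q/(lam*(n:ℝ)))^2 * sqnorm (x i.1))
        - (1/(n:ℝ)) * (((1-s)*lstar i.1 (-(β i)) + s*((-(u i))*z - l i.1 z)
            - γ/2*(s*(1-s))*q^2) - lstar i.1 (-(β i))) := by
      rw [hu']
      field_simp
      ring
    have h3 : (s/(n:ℝ)) * (β i * z + l i.1 z + lstar i.1 (-(β i)))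
        - (1/(2*lam*(n:ℝ)^2)) *
            ((s^2 * sqnorm (x i.1) - lam * n * γ * s * (1-s)) * q^2)
      ≤ locDual lam x lstar part k wbar (Function.update β i c)
        - locDual lam x lstar part k wbar β := by
      rw [hA, hid]; linarith [hE]
    have h4 := hst_max i β c
    calc _ ≤ _ := h3
      _ ≤ _ := by linarith [h4]
  -- sum the key inequality
  have hsum := Finset.sum_le_sum (fun i (_ : i ∈ Finset.univ) => key i)
  -- primal-dual gap identity
  have h1 : sqnorm w = sqnorm wbar + 2*dotp wbar v + sqnorm v := by
    rw [hw]; exact sqnorm_add' wbar v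
  have h2 : dotp w v = dotp wbar v + dotp v v := by
    rw [hw]; exact dotp_add_left wbar v v
  have h3 : sqnorm v = dotp v v := sqnorm_eq_dotp v
  have h4 : lam * dotp w v
      = (1/(n:ℝ)) * ∑ i : {i : Fin n // part i = k}, β i * dotp w (x i.1) := by
    rw [hv, dotp_blkA, Finset.mul_sum, Finset.mul_sum]
    refine Finset.sum_congr rfl fun i _ => ?_
    field_simp
  have hgap : locPrimal lam x l part k wbar v - locDual lam x lstar part k wbar β
      = (1/(n:ℝ)) * ∑ i : {i : Fin n // part i = k},
          (β i * dotp w (x i.1) + l i.1 (dotp w (x i.1)) + lstar i.1 (-(β i))) := by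
    unfold locPrimal locDual
    rw [← hv, show wbar + v = w from hw.symm]
    rw [Finset.sum_add_distrib, Finset.sum_add_distrib, mul_add, mul_add]
    linear_combination (lam/2) * h1 - lam * h2 + lam * h3 + h4
  -- rewrite the sum of key LHS
  have hL : ∑ i : {i : Fin n // part i = k},
      ((s/(n:ℝ)) * (β i * dotp w (x i.1) + l i.1 (dotp w (x i.1)) + lstar i.1 (-(β i)))
        - (1/(2*lam*(n:ℝ)^2)) *
            ((s^2 * sqnorm (x i.1) - lam * n * γ * s * (1-s)) * (u i - β i)^2))
    = s * (locPrimal lam x l part k wbar v - locDual lam x lstar part k wbar β)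
      - (1/(2*lam*(n:ℝ)^2)) * ∑ i : {i : Fin n // part i = k},
          (s^2 * sqnorm (x i.1) - lam * n * γ * s * (1-s)) * (u i - β i)^2 := by
    rw [Finset.sum_sub_distrib, ← Finset.mul_sum, ← Finset.mul_sum, hgap]
    ring
  have hR : ∑ i : {i : Fin n // part i = k},
      (locDual lam x lstar part k wbar (st i β) - locDual lam x lstar part k wbar β)
    = (∑ i : {i : Fin n // part i = k}, locDual lam x lstar part k wbar (st i β))
      - (Fintype.card {i : Fin n // part i = k} : ℝ) * locDual lam x lstar part k wbar β := by
    rw [Finset.sum_sub_distrib, Finset.sum_const, Finset.card_univ, nsmul_eq_mul]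
  rw [hL, hR] at hsum
  -- divide by the block size
  have goal_lhs : s / (Fintype.card {i : Fin n // part i = k} : ℝ) *
        (locPrimal lam x l part k wbar v - locDual lam x lstar part k wbar β)
      - 1 / (2 * lam * (n : ℝ) ^ 2) *
          (1 / (Fintype.card {i : Fin n // part i = k} : ℝ)) *
          ∑ i : {i : Fin n // part i = k},
            (s ^ 2 * sqnorm (x i.1) - lam * n * γ * s * (1 - s)) * (u i - β i) ^ 2
    = (s * (locPrimal lam x l part k wbar v - locDual lam x lstar part k wbar β)
      - (1/(2*lam*(n:ℝ)^2)) * ∑ i : {i : Fin n // part i = k},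
          (s^2 * sqnorm (x i.1) - lam * n * γ * s * (1-s)) * (u i - β i)^2)
      / (Fintype.card {i : Fin n // part i = k} : ℝ) := by
    field_simp
  have goal_rhs : (∑ i : {i : Fin n // part i = k}, locDual lam x lstar part k wbar (st i β))
          / (Fintype.card {i : Fin n // part i = k} : ℝ)
        - locDual lam x lstar part k wbar β
    = ((∑ i : {i : Fin n // part i = k}, locDual lam x lstar part k wbar (st i β))
      - (Fintype.card {i : Fin n // part i = k} : ℝ) * locDual lam x lstar part k wbar β)
      / (Fintype.card {i : Fin n // part i = k} : ℝ) := by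
    field_simp
  rw [goal_lhs, goal_rhs]
  gcongr
end
end
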